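/- For every n ≥ 1, the minimum size of an incremental dominating set of the path P_n given in the standard order is ⌈n/2⌉. -/

import Mathlib

/-- `D` is a dominating set of the prefix graph `G_i` (induced on the first `i`
vertices `v_1, …, v_i`, i.e. the vertices of `Fin n` with value `< i`);
here `D` is assumed to consist of vertices of the prefix, so that adjacency
in `G_i` coincides with adjacency in `G`. -/
def PrefixDom {n : ℕ} (G : SimpleGraph (Fin n)) (i : ℕ) (D : Finset (Fin n)) : Prop :=
  ∀ v : Fin n, v.val < i → v ∈ D ∨ ∃ u ∈ D, G.Adj u v

/-- The natural ordering `v_1, …, v_n` of `Fin n` is always-connected: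
every prefix graph `G_i` (for `1 ≤ i ≤ n`) is connected. -/
def AlwaysConnected {n : ℕ} (G : SimpleGraph (Fin n)) : Prop :=
  ∀ i : ℕ, 1 ≤ i → i ≤ n → (G.induce {v : Fin n | v.val < i}).Connected

/-- `D 1 ⊆ D 2 ⊆ ⋯ ⊆ D n` is a chain in which each `D i` is a subset of
`{v_1, …, v_i}` that is a dominating set of the prefix graph `G_i`. -/
def IncDomChain {n : ℕ} (G : SimpleGraph (Fin n)) (D : ℕ → Finset (Fin n)) : Prop :=
  (∀ i : ℕ, 1 ≤ i → i < n → D i ⊆ D (i + 1)) ∧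
  (∀ i : ℕ, 1 ≤ i → i ≤ n → (∀ v ∈ D i, v.val < i) ∧ PrefixDom G i (D i))

/-- `R` is an incremental dominating set of `G`: the final set `D n` of some
incremental dominating chain. -/
def IsIncDomSet {n : ℕ} (G : SimpleGraph (Fin n)) (R : Finset (Fin n)) : Prop :=
  ∃ D : ℕ → Finset (Fin n), IncDomChain G D ∧ R = D n

/-- An incremental connected dominating chain: additionally, each `D i`
induces a connected subgraph. -/
def IncConnDomChain {n : ℕ} (G : SimpleGraph (Fin n)) (D : ℕ → Finset (Fin n)) : Prop :=
  IncDomChain G D ∧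
    ∀ i : ℕ, 1 ≤ i → i ≤ n → (G.induce (↑(D i) : Set (Fin n))).Connected

/-- `R` is an incremental connected dominating set of `G`. -/
def IsIncConnDomSet {n : ℕ} (G : SimpleGraph (Fin n)) (R : Finset (Fin n)) : Prop :=
  ∃ D : ℕ → Finset (Fin n), IncConnDomChain G D ∧ R = D n

lemma card_evens (n : ℕ) :
    ((Finset.range n).filter (fun k => k % 2 = 0)).card = (n + 1) / 2 := by
  induction n with
  | zero => simp
  | succ n ih =>
    rw [Finset.range_add_one, Finset.filter_insert]
    by_cases h : n % 2 = 0
    · rw [if_pos h, Finset.card_insert_of_notMem (by simp), ih]; omega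
    · rw [if_neg h, ih]; omega

/-- For every `n ≥ 1`, the minimum size of an incremental dominating
set of the path `P_n` given in the standard order is `⌈n/2⌉`. -/
theorem min_inc_dominating_path {n : ℕ} (hn : 1 ≤ n) :
    IsLeast {k : ℕ | ∃ R : Finset (Fin n),
        IsIncDomSet (SimpleGraph.pathGraph n) R ∧ R.card = k}
      ((n + 1) / 2) := by
  constructor
  · -- membership: the evens work
    refine ⟨Finset.univ.filter (fun v : Fin n => v.val % 2 = 0),
      ⟨fun i => Finset.univ.filter (fun v : Fin n => v.val < i ∧ v.val % 2 = 0), ⟨?_, ?_⟩, ?_⟩, ?_⟩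
    · intro i _ _ v hv
      simp only [Finset.mem_filter] at *
      exact ⟨hv.1, by omega, hv.2.2⟩
    · intro i hi hin
      refine ⟨fun v hv => (Finset.mem_filter.1 hv).2.1, fun v hv => ?_⟩
      by_cases he : v.val % 2 = 0
      · exact Or.inl (by simp [he, hv])
      · refine Or.inr ⟨⟨v.val - 1, by omega⟩, by simp; omega, ?_⟩
        rw [SimpleGraph.pathGraph_adj]
        simp only []
        omega
    · ext v; simp [v.isLt]
    · rw [← card_evens n]
      apply Finset.card_nbij (i := Fin.val)
      · intro v hv
        simp only [Finset.mem_coe, Finset.mem_filter, Finset.mem_univ, true_and] at hv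
        simp only [Finset.mem_coe, Finset.mem_filter, Finset.mem_range]
        exact ⟨v.isLt, hv⟩
      · intro a _ b _ h; exact Fin.val_injective h
      · intro a ha
        simp only [Finset.coe_filter, Finset.mem_range, Set.mem_setOf_eq] at ha
        rw [Set.mem_image]
        exact ⟨⟨a, ha.1⟩, by simp [ha.2], rfl⟩
  · -- lower bound
    rintro k ⟨R, ⟨D, ⟨hmono, hdom⟩, rfl⟩, rfl⟩
    have hsub : ∀ i : ℕ, 1 ≤ i → i ≤ n → D i ⊆ D n := by
      intro i hi hin
      have : ∀ j, i ≤ j → j ≤ n → D i ⊆ D j := by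
        intro j
        induction j with
        | zero => intro h1 h2; omega
        | succ j ih =>
          intro h1 h2
          rcases Nat.lt_or_ge i (j+1) with h | h
          · exact (ih (by omega) (by omega)).trans (hmono j (by omega) (by omega))
          · have : i = j + 1 := by omega
            subst this; exact subset_rfl
      exact this n hin le_rfl
    have key : ∀ k ∈ Finset.range ((n + 1) / 2), ∃ v ∈ D n, (v.val + 1) / 2 = k := by
      intro k hk
      rw [Finset.mem_range] at hk
      have h2k : 2 * k + 1 ≤ n := by omega
      obtain ⟨hpre, hd⟩ := hdom (2 * k + 1) (by omega) h2k
      rcases hd ⟨2 * k, by omega⟩ (by simp) with h | ⟨u, hu, hadj⟩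
      · exact ⟨_, hsub _ (by omega) h2k h, by simp; omega⟩
      · have hu2 := hpre u hu
        rw [SimpleGraph.pathGraph_adj] at hadj
        simp only [] at hadj
        refine ⟨u, hsub _ (by omega) h2k hu, ?_⟩
        omega
    calc (n + 1) / 2 = (Finset.range ((n + 1) / 2)).card := by simp
      _ ≤ (D n).card := by
          apply Finset.card_le_card_of_surjOn (fun v => (v.val + 1) / 2)
          intro b hb
          simp only [Finset.coe_range, Set.mem_Iio] at hb
          obtain ⟨v, hv, hvk⟩ := key b (Finset.mem_range.2 hb)
          exact ⟨v, hv, hvk⟩
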